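/- (Convergence of the Haar wavelet method for the four-point BVP.) Let n₁, n₂, v₁, v₂ ∈ (0,1) with n₁n₂v₁v₂ ≠ 1, and let y, z : [0,1] → ℝ be three times differentiable with |y'''(t)| ≤ ξ₁ and |z'''(t)| ≤ ξ₂ for all t ∈ [0,1]. Define the Haar coefficients a_{2^j+k+1} = 2^j ∫₀¹ y''(t) h_{2^j+k+1}(t) dt and b_{2^j+k+1} = 2^j ∫₀¹ z''(t) h_{2^j+k+1}(t) dt, and for an integer J ≥ 0 define the truncation error Ē_{M1}(t) = (n₁t/(1 − n₁n₂v₁v₂))·[ n₂v₁ Σ_{j>J} Σ_k a_{2^j+k+1}(p_{2,2^j+k+1}(v₂) − v₂p_{2,2^j+k+1}(1)) + Σ_{j>J} Σ_k b_{2^j+k+1}(p_{2,2^j+k+1}(v₁) − v₁p_{2,2^j+k+1}(1)) ] + Σ_{j>J} Σ_k a_{2^j+k+1}(p_{2,2^j+k+1}(t) − t·p_{2,2^j+k+1}(1)), where each sum over k runs from 0 to 2^j − 1. Then there exists a constant C̃ > 0, depending only on n₁, n₂, v₁, v₂, ξ₁, ξ₂, such that for all J ≥ 0 the L²([0,1])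 bound ‖Ē_{M1}‖₂ ≤ C̃·(2^{−(J+1)})² holds. -/

import Mathlib

open MeasureTheory Real

/-- Left endpoint of the support of the Haar wavelet indexed by `(j, k)`. -/
noncomputable def eta1 (j k : ℕ) : ℝ := (k : ℝ) / 2 ^ j

/-- Midpoint of the support of the Haar wavelet indexed by `(j, k)`. -/
noncomputable def eta2 (j k : ℕ) : ℝ := (2 * (k : ℝ) + 1) / 2 ^ (j + 1)

/-- Right endpoint of the support of the Haar wavelet indexed by `(j, k)`. -/
noncomputable def eta3 (j k : ℕ) : ℝ := ((k : ℝ) + 1) / 2 ^ j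

/-- The Haar wavelet `h_i` with `i = 2^j + k + 1`: equals `1` on `[η₁, η₂)`,
`-1` on `[η₂, η₃)` and `0` elsewhere. -/
noncomputable def haarJK (j k : ℕ) (t : ℝ) : ℝ :=
  if eta1 j k ≤ t ∧ t < eta2 j k then 1
  else if eta2 j k ≤ t ∧ t < eta3 j k then -1
  else 0

/-- `p_{2,i}(t) = ∫₀ᵗ (t - s) h_i(s) ds` where `i = 2^j + k + 1`. -/
noncomputable def p2JK (j k : ℕ) (t : ℝ) : ℝ := ∫ s in (0:ℝ)..t, (t - s) * haarJK j k s

/-- The Haar coefficient `2^j ∫₀¹ f(t) h_{2^j+k+1}(t) dt` of a function `f`. -/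
noncomputable def haarCoeff (f : ℝ → ℝ) (j k : ℕ) : ℝ :=
  2 ^ j * ∫ t in (0:ℝ)..1, f t * haarJK j k t

/-- Truncation error of the Haar expansion at resolution `J`:
`Σ_{j=J+1}^∞ Σ_{k=0}^{2^j-1} c_{j,k} p_{2,2^j+k+1}(t)` (here the outer sum is
reindexed by `j = J + 1 + m`). -/
noncomputable def truncErr (c : ℕ → ℕ → ℝ) (J : ℕ) (t : ℝ) : ℝ :=
  ∑' m : ℕ, ∑ k ∈ Finset.range (2 ^ (J + 1 + m)), c (J + 1 + m) k * p2JK (J + 1 + m) k t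

/-- The `L²([0,1])` norm of a function. -/
noncomputable def L2norm (f : ℝ → ℝ) : ℝ := Real.sqrt (∫ t in (0:ℝ)..1, f t ^ 2)

/-- Truncation error `Ē_{M1}` of the Haar method for the four-point BVP, at
resolution `J`, built from the coefficient families `a` (of `y''`) and `b`
(of `z''`); the outer sums over `j > J` are reindexed by `j = J + 1 + m`. -/
noncomputable def truncErr4pt (n₁ n₂ v₁ v₂ : ℝ) (a b : ℕ → ℕ → ℝ) (J : ℕ) (t : ℝ) : ℝ :=
  n₁ * t / (1 - n₁ * n₂ * v₁ * v₂) *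
    (n₂ * v₁ * ∑' m : ℕ, ∑ k ∈ Finset.range (2 ^ (J + 1 + m)),
        a (J + 1 + m) k * (p2JK (J + 1 + m) k v₂ - v₂ * p2JK (J + 1 + m) k 1) +
      ∑' m : ℕ, ∑ k ∈ Finset.range (2 ^ (J + 1 + m)),
        b (J + 1 + m) k * (p2JK (J + 1 + m) k v₁ - v₁ * p2JK (J + 1 + m) k 1)) +
  ∑' m : ℕ, ∑ k ∈ Finset.range (2 ^ (J + 1 + m)),
    a (J + 1 + m) k * (p2JK (J + 1 + m) k t - t * p2JK (J + 1 + m) k 1)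

section Aux
variable (j k : ℕ)

lemma eta12 : eta2 j k - eta1 j k = 1 / 2 ^ (j+1) := by
  unfold eta1 eta2; rw [pow_succ]; field_simp; ring

lemma eta23 : eta3 j k - eta2 j k = 1 / 2 ^ (j+1) := by
  unfold eta3 eta2; rw [pow_succ]; field_simp; ring

lemma eta1_nonneg : 0 ≤ eta1 j k := by unfold eta1; positivity

lemma eta12_lt : eta1 j k < eta2 j k := by
  have h := eta12 j k
  have h2 : (0:ℝ) < 1 / 2 ^ (j+1) := by positivity
  linarith

lemma eta23_lt : eta2 j k < eta3 j k := by
  have h := eta23 j k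
  have h2 : (0:ℝ) < 1 / 2 ^ (j+1) := by positivity
  linarith

lemma eta3_le_one (hk : k < 2 ^ j) : eta3 j k ≤ 1 := by
  unfold eta3
  rw [div_le_one (by positivity)]
  have : (k:ℝ) + 1 ≤ (2:ℝ)^j := by exact_mod_cast Nat.succ_le_of_lt hk
  simpa using this

lemma haar_eq_one {s : ℝ} (h1 : eta1 j k ≤ s) (h2 : s < eta2 j k) : haarJK j k s = 1 := by
  simp [haarJK, h1, h2]

lemma haar_eq_negone {s : ℝ} (h1 : eta2 j k ≤ s) (h2 : s < eta3 j k) : haarJK j k s = -1 := by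
  have : ¬ (s < eta2 j k) := not_lt.mpr h1
  simp [haarJK, this, h1, h2]

lemma haar_eq_zero_left {s : ℝ} (h : s < eta1 j k) : haarJK j k s = 0 := by
  have h2 : ¬ (eta1 j k ≤ s) := not_le.mpr h
  have h3 : ¬ (eta2 j k ≤ s) := not_le.mpr (h.trans (eta12_lt j k))
  simp [haarJK, h2, h3]

lemma haar_eq_zero_right {s : ℝ} (h : eta3 j k ≤ s) : haarJK j k s = 0 := by
  have h2 : ¬ (s < eta2 j k) := not_lt.mpr ((eta23_lt j k).le.trans h)
  have h3 : ¬ (s < eta3 j k) := not_lt.mpr h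
  simp [haarJK, h2, h3]

lemma haar_abs_le (s : ℝ) : |haarJK j k s| ≤ 1 := by
  unfold haarJK; split_ifs <;> simp

lemma haar_measurable : Measurable (haarJK j k) := by
  unfold haarJK
  apply Measurable.ite
  · exact (measurableSet_le measurable_const measurable_id).inter
      (measurableSet_lt measurable_id measurable_const)
  · exact measurable_const
  · apply Measurable.ite
    · exact (measurableSet_le measurable_const measurable_id).inter
        (measurableSet_lt measurable_id measurable_const)
    · exact measurable_const
    · exact measurable_const

lemma haar_intervalIntegrable (a b : ℝ) : IntervalIntegrable (haarJK j k) volume a b := by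
  rw [intervalIntegrable_iff]
  apply Integrable.mono' (g := fun _ => (1:ℝ))
  · exact integrableOn_const measure_Ioc_lt_top.ne
  · exact (haar_measurable j k).aestronglyMeasurable.restrict
  · filter_upwards with s
    simpa using haar_abs_le j k s

end Aux

section Part2
variable (j k : ℕ)

/-- Replace integrand that agrees on the open interval. -/
lemma integral_congr_Ioo {a b : ℝ} (hab : a ≤ b) {F G : ℝ → ℝ}
    (h : ∀ s ∈ Set.Ioo a b, F s = G s) :
    ∫ s in a..b, F s = ∫ s in a..b, G s := by
  apply intervalIntegral.integral_congr_ae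
  have hb : (volume : Measure ℝ) {b} = 0 := measure_singleton b
  filter_upwards [compl_mem_ae_iff.mpr hb] with s hs hmem
  rw [Set.uIoc_of_le hab] at hmem
  exact h s ⟨hmem.1, lt_of_le_of_ne hmem.2 (by simpa using hs)⟩

lemma piece_integral (t a b c : ℝ) (hab : a ≤ b)
    (hc : ∀ s ∈ Set.Ioo a b, haarJK j k s = c) :
    ∫ s in a..b, (t - s) * haarJK j k s = c * (t * (b - a) - (b ^ 2 - a ^ 2) / 2) := by
  rw [integral_congr_Ioo hab (G := fun s => (t - s) * c)
    (fun s hs => by rw [hc s hs])]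
  rw [intervalIntegral.integral_mul_const]
  rw [intervalIntegral.integral_sub (intervalIntegrable_const (c := t)) intervalIntegral.intervalIntegrable_id]
  simp [integral_id]
  ring

lemma ts_haar_intervalIntegrable (t a b : ℝ) :
    IntervalIntegrable (fun s => (t - s) * haarJK j k s) volume a b := by
  apply IntervalIntegrable.continuousOn_mul (haar_intervalIntegrable j k a b)
  exact (continuous_const.sub continuous_id).continuousOn

/-- Bound on `p2JK` for `t ≥ 0`. -/
lemma p2_abs_le (t : ℝ) (ht : 0 ≤ t) : |p2JK j k t| ≤ (1 / 2 ^ (j+1)) ^ 2 := by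
  set b1 := eta1 j k
  set b2 := eta2 j k
  set b3 := eta3 j k
  have h12 : b2 - b1 = 1 / 2 ^ (j+1) := eta12 j k
  have h23 : b3 - b2 = 1 / 2 ^ (j+1) := eta23 j k
  have hd : (0:ℝ) < 1 / 2 ^ (j+1) := by positivity
  have h1n : 0 ≤ b1 := eta1_nonneg j k
  set d := (1:ℝ) / 2 ^ (j+1) with hdd
  unfold p2JK
  rcases le_or_gt t b1 with h | h
  · -- t ≤ b1 : integrand zero on (0, t)
    rw [piece_integral j k t 0 t 0 ht
      (fun s hs => haar_eq_zero_left j k (lt_of_lt_of_le hs.2 h))]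
    simp
    positivity
  · rcases le_or_gt t b2 with h2 | h2
    · -- b1 < t ≤ b2
      rw [← intervalIntegral.integral_add_adjacent_intervals
        (ts_haar_intervalIntegrable j k t 0 b1) (ts_haar_intervalIntegrable j k t b1 t)]
      rw [piece_integral j k t 0 b1 0 h1n (fun s hs => haar_eq_zero_left j k hs.2),
        piece_integral j k t b1 t 1 h.le
          (fun s hs => haar_eq_one j k hs.1.le (hs.2.trans_le h2))]
      rw [abs_le]
      constructor <;> nlinarith [sq_nonneg (t - b1), sq_nonneg (t - b1 - d)]
    · rcases le_or_gt t b3 with h3 | h3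
      · -- b2 < t ≤ b3
        rw [← intervalIntegral.integral_add_adjacent_intervals
          (ts_haar_intervalIntegrable j k t 0 b2) (ts_haar_intervalIntegrable j k t b2 t),
          ← intervalIntegral.integral_add_adjacent_intervals
          (ts_haar_intervalIntegrable j k t 0 b1) (ts_haar_intervalIntegrable j k t b1 b2)]
        rw [piece_integral j k t 0 b1 0 h1n (fun s hs => haar_eq_zero_left j k hs.2),
          piece_integral j k t b1 b2 1 (by linarith) (fun s hs => haar_eq_one j k hs.1.le hs.2),
          piece_integral j k t b2 t (-1) h2.le
            (fun s hs => haar_eq_negone j k hs.1.le (hs.2.trans_le h3))]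
        rw [abs_le]
        constructor <;> nlinarith [sq_nonneg (t - b2), sq_nonneg (t - b2 - d), sq_nonneg (b3 - t)]
      · -- t > b3
        rw [← intervalIntegral.integral_add_adjacent_intervals
          (ts_haar_intervalIntegrable j k t 0 b3) (ts_haar_intervalIntegrable j k t b3 t),
          ← intervalIntegral.integral_add_adjacent_intervals
          (ts_haar_intervalIntegrable j k t 0 b2) (ts_haar_intervalIntegrable j k t b2 b3),
          ← intervalIntegral.integral_add_adjacent_intervals
          (ts_haar_intervalIntegrable j k t 0 b1) (ts_haar_intervalIntegrable j k t b1 b2)]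
        rw [piece_integral j k t 0 b1 0 h1n (fun s hs => haar_eq_zero_left j k hs.2),
          piece_integral j k t b1 b2 1 (by linarith) (fun s hs => haar_eq_one j k hs.1.le hs.2),
          piece_integral j k t b2 b3 (-1) (by linarith)
            (fun s hs => haar_eq_negone j k hs.1.le hs.2),
          piece_integral j k t b3 t 0 h3.le (fun s hs => haar_eq_zero_right j k hs.1.le)]
        rw [abs_le]
        constructor <;> nlinarith

end Part2

section Part3

lemma coeff_abs_le (f : ℝ → ℝ) (hf : Differentiable ℝ f) (ξ : ℝ)
    (hb : ∀ t ∈ Set.Icc (0:ℝ) 1, |deriv f t| ≤ ξ) (j k : ℕ) (hk : k < 2 ^ j) :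
    |haarCoeff f j k| ≤ ξ * 2 ^ j * (1 / 2 ^ (j+1)) ^ 2 := by
  set b1 := eta1 j k
  set b2 := eta2 j k
  set b3 := eta3 j k
  set d := (1:ℝ) / 2 ^ (j+1) with hdd
  have h12 : b2 - b1 = d := eta12 j k
  have h23 : b3 - b2 = d := eta23 j k
  have hd : (0:ℝ) < d := by positivity
  have h1n : 0 ≤ b1 := eta1_nonneg j k
  have h31 : b3 ≤ 1 := eta3_le_one j k hk
  have hII : ∀ a b : ℝ, IntervalIntegrable (fun s => f s * haarJK j k s) volume a b :=
    fun a b => (haar_intervalIntegrable j k a b).continuousOn_mul hf.continuous.continuousOn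
  have hsplit : ∫ s in (0:ℝ)..1, f s * haarJK j k s =
      ((∫ s in (0:ℝ)..b1, f s * haarJK j k s) + ∫ s in b1..b2, f s * haarJK j k s) +
      ((∫ s in b2..b3, f s * haarJK j k s) + ∫ s in b3..(1:ℝ), f s * haarJK j k s) := by
    rw [intervalIntegral.integral_add_adjacent_intervals (hII 0 b1) (hII b1 b2),
      intervalIntegral.integral_add_adjacent_intervals (hII b2 b3) (hII b3 1),
      intervalIntegral.integral_add_adjacent_intervals (hII 0 b2) (hII b2 1)]
  have hz1 : ∫ s in (0:ℝ)..b1, f s * haarJK j k s = 0 := by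
    rw [integral_congr_Ioo h1n (G := fun _ => (0:ℝ))
      (fun s hs => by rw [haar_eq_zero_left j k hs.2, mul_zero])]
    simp
  have hz2 : ∫ s in b3..(1:ℝ), f s * haarJK j k s = 0 := by
    rw [integral_congr_Ioo h31 (G := fun _ => (0:ℝ))
      (fun s hs => by rw [haar_eq_zero_right j k hs.1.le, mul_zero])]
    simp
  have hm1 : ∫ s in b1..b2, f s * haarJK j k s = ∫ s in b1..b2, f s := by
    exact integral_congr_Ioo (by linarith) (fun s hs => by
      rw [haar_eq_one j k hs.1.le hs.2, mul_one])
  have hm2 : ∫ s in b2..b3, f s * haarJK j k s = - ∫ s in b2..b3, f s := by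
    rw [integral_congr_Ioo (by linarith) (G := fun s => -f s) (fun s hs => by
      rw [haar_eq_negone j k hs.1.le hs.2]; ring)]
    exact intervalIntegral.integral_neg
  have hshift : ∫ s in b2..b3, f s = ∫ s in b1..b2, f (s + d) := by
    rw [intervalIntegral.integral_comp_add_right]
    congr 1 <;> linarith
  have hcomb : ∫ s in (0:ℝ)..1, f s * haarJK j k s
      = ∫ s in b1..b2, (f s - f (s + d)) := by
    have hc2 : Continuous fun s : ℝ => f (s + d) := hf.continuous.comp (continuous_add_right d)
    rw [hsplit, hz1, hz2, hm1, hm2, hshift,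
      intervalIntegral.integral_sub (hf.continuous.intervalIntegrable _ _)
        (hc2.intervalIntegrable _ _)]
    ring
  have hbound : ‖∫ s in b1..b2, (f s - f (s + d))‖ ≤ (ξ * d) * |b2 - b1| := by
    apply intervalIntegral.norm_integral_le_of_norm_le_const
    intro x hx
    rw [Set.uIoc_of_le (by linarith)] at hx
    have hx1 : x ∈ Set.Icc (0:ℝ) 1 := ⟨by linarith [hx.1], by linarith [hx.2]⟩
    have hx2 : x + d ∈ Set.Icc (0:ℝ) 1 := ⟨by linarith [hx.1], by linarith [hx.2]⟩
    have := Convex.norm_image_sub_le_of_norm_deriv_le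
      (f := f) (fun y (_ : y ∈ Set.Icc (0:ℝ) 1) => hf y)
      (fun y hy => by rw [Real.norm_eq_abs]; exact hb y hy) (convex_Icc 0 1) hx1 hx2
    calc ‖f x - f (x + d)‖ = ‖f (x + d) - f x‖ := by rw [norm_sub_rev]
      _ ≤ ξ * ‖(x + d) - x‖ := this
      _ = ξ * d := by rw [show x + d - x = d by ring, Real.norm_eq_abs, abs_of_pos hd]
  unfold haarCoeff
  rw [hcomb, abs_mul]
  have h2j : |(2:ℝ) ^ j| = 2 ^ j := abs_of_pos (by positivity)
  rw [h2j]
  have : |∫ s in b1..b2, (f s - f (s + d))| ≤ ξ * d * d := by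
    have := hbound
    rw [Real.norm_eq_abs] at this
    calc |∫ s in b1..b2, (f s - f (s + d))| ≤ ξ * d * |b2 - b1| := this
      _ = ξ * d * d := by rw [h12, abs_of_pos hd]
  calc (2:ℝ) ^ j * |∫ s in b1..b2, (f s - f (s + d))| ≤ 2 ^ j * (ξ * d * d) := by
        apply mul_le_mul_of_nonneg_left this (by positivity)
    _ = ξ * 2 ^ j * (1 / 2 ^ (j+1)) ^ 2 := by rw [hdd]; ring

end Part3

section Part4

lemma pow_half_sq (j : ℕ) : ((1:ℝ) / 2 ^ (j+1)) ^ 2 = 1 / 4 * (1/4) ^ j := by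
  have h4 : (4:ℝ) ^ j = (2 ^ j) ^ 2 := by
    rw [show (4:ℝ) = 2 ^ 2 by norm_num, ← pow_mul, mul_comm, pow_mul]
  have h2 : (0:ℝ) < 2 ^ j := by positivity
  rw [div_pow, one_div_pow]
  rw [pow_succ]
  field_simp
  rw [h4]; ring

lemma sumk_bound (f : ℝ → ℝ) (hf : Differentiable ℝ f) (ξ : ℝ) (hξ : 0 ≤ ξ)
    (hb : ∀ t ∈ Set.Icc (0:ℝ) 1, |deriv f t| ≤ ξ) (j : ℕ) (t : ℝ)
    (ht0 : 0 ≤ t) (ht1 : t ≤ 1) :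
    |∑ k ∈ Finset.range (2 ^ j),
        haarCoeff f j k * (p2JK j k t - t * p2JK j k 1)| ≤ ξ / 8 * (1/4) ^ j := by
  set d2 := ((1:ℝ) / 2 ^ (j+1)) ^ 2 with hd2
  have hd2pos : 0 < d2 := by rw [hd2]; positivity
  have hterm : ∀ k ∈ Finset.range (2 ^ j),
      |haarCoeff f j k * (p2JK j k t - t * p2JK j k 1)| ≤ (ξ * 2 ^ j * d2) * (2 * d2) := by
    intro k hk
    rw [abs_mul]
    apply mul_le_mul (coeff_abs_le f hf ξ hb j k (Finset.mem_range.mp hk)) ?_ (abs_nonneg _)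
      (by positivity)
    calc |p2JK j k t - t * p2JK j k 1| ≤ |p2JK j k t| + |t * p2JK j k 1| := abs_sub _ _
      _ ≤ d2 + 1 * d2 := by
          gcongr
          · exact p2_abs_le j k t ht0
          · rw [abs_mul]
            apply mul_le_mul (by rw [abs_of_nonneg ht0]; exact ht1)
              (p2_abs_le j k 1 zero_le_one) (abs_nonneg _) zero_le_one
      _ = 2 * d2 := by ring
  calc |∑ k ∈ Finset.range (2 ^ j), haarCoeff f j k * (p2JK j k t - t * p2JK j k 1)|
      ≤ ∑ k ∈ Finset.range (2 ^ j), |haarCoeff f j k * (p2JK j k t - t * p2JK j k 1)| :=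
        Finset.abs_sum_le_sum_abs _ _
    _ ≤ ∑ _k ∈ Finset.range (2 ^ j), (ξ * 2 ^ j * d2) * (2 * d2) := Finset.sum_le_sum hterm
    _ = (2 ^ j : ℕ) * ((ξ * 2 ^ j * d2) * (2 * d2)) := by
        rw [Finset.sum_const, Finset.card_range, nsmul_eq_mul]
    _ = ξ / 8 * (1/4) ^ j := by
        push_cast
        rw [hd2, pow_half_sq j]
        have h4 : (4:ℝ) ^ j = (2 ^ j) ^ 2 := by
          rw [show (4:ℝ) = 2 ^ 2 by norm_num, ← pow_mul, mul_comm, pow_mul]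
        have h2 : (0:ℝ) < 2 ^ j := by positivity
        rw [one_div_pow, h4]
        field_simp
        ring

lemma tail_bound (f : ℝ → ℝ) (hf : Differentiable ℝ f) (ξ : ℝ) (hξ : 0 ≤ ξ)
    (hb : ∀ t ∈ Set.Icc (0:ℝ) 1, |deriv f t| ≤ ξ) (J : ℕ) (t : ℝ)
    (ht0 : 0 ≤ t) (ht1 : t ≤ 1) :
    |∑' m : ℕ, ∑ k ∈ Finset.range (2 ^ (J + 1 + m)),
        haarCoeff f (J+1+m) k * (p2JK (J+1+m) k t - t * p2JK (J+1+m) k 1)|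
      ≤ ξ * (1 / 2 ^ (J+1)) ^ 2 := by
  set g : ℕ → ℝ := fun m => ∑ k ∈ Finset.range (2 ^ (J + 1 + m)),
    haarCoeff f (J+1+m) k * (p2JK (J+1+m) k t - t * p2JK (J+1+m) k 1) with hg
  have hgle : ∀ m, ‖g m‖ ≤ (ξ / 8 * (1/4) ^ (J+1)) * (1/4) ^ m := by
    intro m
    rw [Real.norm_eq_abs]
    calc |g m| ≤ ξ / 8 * (1/4) ^ (J + 1 + m) := sumk_bound f hf ξ hξ hb (J+1+m) t ht0 ht1
      _ = (ξ / 8 * (1/4) ^ (J+1)) * (1/4) ^ m := by rw [pow_add]; ring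
  have hsumgeo : Summable (fun m : ℕ => (ξ / 8 * (1/4) ^ (J+1)) * (1/4) ^ m) :=
    (summable_geometric_of_lt_one (by norm_num) (by norm_num)).mul_left _
  have hsumnorm : Summable fun m => ‖g m‖ :=
    Summable.of_nonneg_of_le (fun _ => norm_nonneg _) hgle hsumgeo
  calc |∑' m, g m| ≤ ∑' m, ‖g m‖ := by
        rw [← Real.norm_eq_abs]; exact norm_tsum_le_tsum_norm hsumnorm
    _ ≤ ∑' m : ℕ, (ξ / 8 * (1/4) ^ (J+1)) * (1/4) ^ m :=
        Summable.tsum_le_tsum hgle hsumnorm hsumgeo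
    _ = (ξ / 8 * (1/4) ^ (J+1)) * (1 - 1/4)⁻¹ := by
        rw [tsum_mul_left, tsum_geometric_of_lt_one (by norm_num) (by norm_num)]
    _ ≤ ξ * (1 / 2 ^ (J+1)) ^ 2 := by
        rw [pow_half_sq J, show ((1:ℝ)-1/4)⁻¹ = 4/3 by norm_num, pow_succ]
        nlinarith [mul_nonneg hξ (pow_nonneg (by norm_num : (0:ℝ) ≤ 1/4) J)]
end Part4


/-- Convergence of the Haar wavelet method for the four-point
BVP: there is a constant `C̃ > 0`, depending only on `n₁, n₂, v₁, v₂, ξ₁, ξ₂`,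
such that `‖Ē_{M1}‖₂ ≤ C̃·(2^{-(J+1)})²` for all `J ≥ 0`. -/
theorem haar_four_point_truncation_bound (n₁ n₂ v₁ v₂ ξ₁ ξ₂ : ℝ)
    (hn₁ : n₁ ∈ Set.Ioo (0:ℝ) 1) (hn₂ : n₂ ∈ Set.Ioo (0:ℝ) 1)
    (hv₁ : v₁ ∈ Set.Ioo (0:ℝ) 1) (hv₂ : v₂ ∈ Set.Ioo (0:ℝ) 1)
    (hne : n₁ * n₂ * v₁ * v₂ ≠ 1) :
    ∃ C > 0, ∀ y z : ℝ → ℝ,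
      Differentiable ℝ y → Differentiable ℝ (deriv y) →
        Differentiable ℝ (deriv (deriv y)) →
      Differentiable ℝ z → Differentiable ℝ (deriv z) →
        Differentiable ℝ (deriv (deriv z)) →
      (∀ t ∈ Set.Icc (0:ℝ) 1, |deriv (deriv (deriv y)) t| ≤ ξ₁) →
      (∀ t ∈ Set.Icc (0:ℝ) 1, |deriv (deriv (deriv z)) t| ≤ ξ₂) →
      ∀ J : ℕ,
        L2norm (truncErr4pt n₁ n₂ v₁ v₂
            (haarCoeff (deriv (deriv y))) (haarCoeff (deriv (deriv z))) J) ≤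
          C * (1 / 2 ^ (J + 1)) ^ 2 := by
  have hPne : (1:ℝ) - n₁ * n₂ * v₁ * v₂ ≠ 0 := sub_ne_zero.mpr (Ne.symm hne)
  set A := |n₁| / |1 - n₁ * n₂ * v₁ * v₂| with hAdef
  have hA0 : 0 ≤ A := by positivity
  have habsP : 0 < |1 - n₁ * n₂ * v₁ * v₂| := abs_pos.mpr hPne
  refine ⟨(A + 1) * (|ξ₁| + |ξ₂| + 1), by positivity, ?_⟩
  intro y z hy1 hy2 hy3 hz1 hz2 hz3 hbY hbZ J
  set q := ((1:ℝ) / 2 ^ (J + 1)) ^ 2 with hqdef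
  have hq : 0 < q := by rw [hqdef]; positivity
  have hξ₁0 : 0 ≤ ξ₁ := le_trans (abs_nonneg _) (hbY 0 ⟨le_refl 0, zero_le_one⟩)
  have hξ₂0 : 0 ≤ ξ₂ := le_trans (abs_nonneg _) (hbZ 0 ⟨le_refl 0, zero_le_one⟩)
  set E := truncErr4pt n₁ n₂ v₁ v₂
      (haarCoeff (deriv (deriv y))) (haarCoeff (deriv (deriv z))) J with hEdef
  set B := (A + 1) * (|ξ₁| + |ξ₂| + 1) * q with hBdef
  have hB0 : 0 ≤ B := by positivity
  have hS1 := tail_bound (deriv (deriv y)) hy3 ξ₁ hξ₁0 hbY J v₂ hv₂.1.le hv₂.2.le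
  have hS2 := tail_bound (deriv (deriv z)) hz3 ξ₂ hξ₂0 hbZ J v₁ hv₁.1.le hv₁.2.le
  have key : ∀ t ∈ Set.Icc (0:ℝ) 1, |E t| ≤ B := by
    rintro t ⟨ht0, ht1⟩
    have hS3 := tail_bound (deriv (deriv y)) hy3 ξ₁ hξ₁0 hbY J t ht0 ht1
    rw [hEdef]
    simp only [truncErr4pt]
    set S1 := ∑' m : ℕ, ∑ k ∈ Finset.range (2 ^ (J + 1 + m)),
        haarCoeff (deriv (deriv y)) (J + 1 + m) k *
          (p2JK (J + 1 + m) k v₂ - v₂ * p2JK (J + 1 + m) k 1) with hS1def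
    set S2 := ∑' m : ℕ, ∑ k ∈ Finset.range (2 ^ (J + 1 + m)),
        haarCoeff (deriv (deriv z)) (J + 1 + m) k *
          (p2JK (J + 1 + m) k v₁ - v₁ * p2JK (J + 1 + m) k 1) with hS2def
    set S3 := ∑' m : ℕ, ∑ k ∈ Finset.range (2 ^ (J + 1 + m)),
        haarCoeff (deriv (deriv y)) (J + 1 + m) k *
          (p2JK (J + 1 + m) k t - t * p2JK (J + 1 + m) k 1) with hS3def
    rw [← hqdef] at hS1 hS2 hS3
    have habs : |n₁ * t / (1 - n₁ * n₂ * v₁ * v₂)| ≤ A := by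
      have hnum : |n₁ * t| ≤ |n₁| := by
        rw [abs_mul]
        exact mul_le_of_le_one_right (abs_nonneg _) (abs_le.mpr ⟨by linarith, ht1⟩)
      rw [abs_div, hAdef]
      exact (div_le_div_iff_of_pos_right habsP).mpr hnum
    have hnv1 : |n₂ * v₁| ≤ 1 := by
      rw [abs_of_pos (mul_pos hn₂.1 hv₁.1)]
      nlinarith [hn₂.2, hv₁.2, hn₂.1, hv₁.1]
    have hin : |n₂ * v₁ * S1 + S2| ≤ 1 * (ξ₁ * q) + ξ₂ * q := by
      calc |n₂ * v₁ * S1 + S2| ≤ |n₂ * v₁| * |S1| + |S2| := by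
            rw [← abs_mul]; exact abs_add_le _ _
        _ ≤ 1 * (ξ₁ * q) + ξ₂ * q :=
            add_le_add (mul_le_mul hnv1 hS1 (abs_nonneg _) zero_le_one) hS2
    calc |n₁ * t / (1 - n₁ * n₂ * v₁ * v₂) * (n₂ * v₁ * S1 + S2) + S3|
        ≤ |n₁ * t / (1 - n₁ * n₂ * v₁ * v₂)| * |n₂ * v₁ * S1 + S2| + |S3| := by
          rw [← abs_mul]; exact abs_add_le _ _
      _ ≤ A * (1 * (ξ₁ * q) + ξ₂ * q) + ξ₁ * q :=
          add_le_add (mul_le_mul habs hin (abs_nonneg _) hA0) hS3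
      _ ≤ B := by
          rw [hBdef]
          nlinarith [mul_nonneg (mul_nonneg hA0 (sub_nonneg.mpr (le_abs_self ξ₁))) hq.le,
            mul_nonneg (mul_nonneg hA0 (sub_nonneg.mpr (le_abs_self ξ₂))) hq.le,
            mul_nonneg hA0 hq.le,
            mul_nonneg (sub_nonneg.mpr (le_abs_self ξ₁)) hq.le,
            mul_nonneg (abs_nonneg ξ₂) hq.le, hq.le]
  -- L² step
  show L2norm E ≤ (A + 1) * (|ξ₁| + |ξ₂| + 1) * q
  rw [← hBdef]
  unfold L2norm
  by_cases hInt : IntervalIntegrable (fun t => E t ^ 2) volume 0 1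
  · have h1 : (∫ t in (0:ℝ)..1, E t ^ 2) ≤ ∫ _t in (0:ℝ)..1, B ^ 2 := by
      apply intervalIntegral.integral_mono_on zero_le_one hInt
        (intervalIntegrable_const (c := B ^ 2))
      intro s hs
      obtain ⟨h1, h2⟩ := abs_le.mp (key s hs)
      exact sq_le_sq' h1 h2
    have h2 : (∫ _t in (0:ℝ)..1, B ^ 2) = B ^ 2 := by simp
    calc Real.sqrt (∫ t in (0:ℝ)..1, E t ^ 2) ≤ Real.sqrt (B ^ 2) := by
          apply Real.sqrt_le_sqrt; rw [← h2]; exact h1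
      _ = B := Real.sqrt_sq hB0
  · rw [intervalIntegral.integral_undef hInt, Real.sqrt_zero]
    exact hB0
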